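/- Assume condition (A) holds for Π_h. Then there exists a linear operator E_h : X_h → V_h, where X_h = T(V_h), such that T(E_h f_h) = f_h for all f_h ∈ X_h and ‖E_h f_h‖_𝕍 ≤ ‖Π_h‖ · ‖f_h‖_𝕏 for all f_h ∈ X_h; in particular the operator norm of E_h is at most ‖Π_h‖. -/

import Mathlib

/-- Condition (A) implies condition (A'): existence of a bounded linear extension
operator `E_h : X_h → V_h` with `T ∘ E_h = Id` and `‖E_h‖ ≤ ‖Π_h‖`. -/
theorem exists_extension_operator
    {V : Type*} [NormedAddCommGroup V] [InnerProductSpace ℝ V] [CompleteSpace V]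
    (V₀ : Submodule ℝ V) [IsClosed (V₀ : Set V)]
    (Vh : Submodule ℝ V)
    -- Condition (A): a bounded projection `Π_h` onto `V_h` preserving `𝕍₀`.
    (Pih : V →L[ℝ] V)
    (hPirange : ∀ u : V, Pih u ∈ Vh)
    (hPiproj : ∀ u ∈ Vh, Pih u = u)
    (hPipres : ∀ u ∈ V₀, Pih u ∈ V₀) :
    ∃ E : ↥(Vh.map V₀.mkQ) →ₗ[ℝ] V,
      (∀ f : ↥(Vh.map V₀.mkQ), E f ∈ Vh) ∧
      (∀ f : ↥(Vh.map V₀.mkQ), V₀.mkQ (E f) = (f : V ⧸ V₀)) ∧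
      (∀ f : ↥(Vh.map V₀.mkQ), ‖E f‖ ≤ ‖Pih‖ * ‖(f : V ⧸ V₀)‖) := by
  haveI : CompleteSpace V₀ := (inferInstance : IsClosed (V₀ : Set V)).completeSpace_coe
  -- `Q v = v - proj_{V₀} v`, the minimal-norm representative of `mkQ v`.
  set Q : V →ₗ[ℝ] V :=
    LinearMap.id - (V₀.subtype ∘ₗ (Submodule.orthogonalProjectionOnto V₀ : V →ₗ[ℝ] V₀)) with hQ
  have hQapply : ∀ v : V, Q v = v - (Submodule.orthogonalProjectionOnto V₀ v : V) := fun v => rfl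
  have hker : V₀ ≤ LinearMap.ker Q := by
    intro v hv
    simp [LinearMap.mem_ker, hQapply, (show ((Submodule.orthogonalProjectionOnto V₀ v : V)) = v from Submodule.starProjection_eq_self_iff.2 hv)]
  -- `Q` descends to a linear section `S : V ⧸ V₀ → V` of `mkQ`.
  set S : V ⧸ V₀ →ₗ[ℝ] V := V₀.liftQ Q hker with hS
  have hSmk : ∀ v : V, S (V₀.mkQ v) = Q v := fun v => rfl
  have hsect : ∀ x : V ⧸ V₀, V₀.mkQ (S x) = x := by
    intro x
    obtain ⟨v, rfl⟩ := V₀.mkQ_surjective x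
    rw [hSmk, hQapply]
    rw [map_sub]
    have : V₀.mkQ (Submodule.orthogonalProjectionOnto V₀ v : V) = 0 :=
      (Submodule.Quotient.mk_eq_zero _).2 (Submodule.orthogonalProjectionOnto V₀ v).2
    simp [this]
  have hQnorm_le : ∀ v : V, ‖Q v‖ ≤ ‖v‖ := by
    intro v
    rw [hQapply, show ((Submodule.orthogonalProjectionOnto V₀ v : V)) = V₀.starProjection v from rfl, Submodule.starProjection_minimal]
    have hb : BddBelow (Set.range fun x : V₀ => ‖v - x‖) := by
      refine ⟨0, ?_⟩
      rintro r ⟨x, rfl⟩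
      exact norm_nonneg _
    calc ⨅ x : V₀, ‖v - x‖ ≤ ‖v - (0 : V₀)‖ := ciInf_le hb 0
      _ = ‖v‖ := by simp
  -- The section `S` is norm-nonincreasing.
  have hSnorm : ∀ x : V ⧸ V₀, ‖S x‖ ≤ ‖x‖ := by
    intro x
    refine le_of_forall_pos_le_add fun ε hε => ?_
    obtain ⟨m, hm, hmlt⟩ := Submodule.Quotient.norm_mk_lt x hε
    have hmx : V₀.mkQ m = x := hm
    calc ‖S x‖ = ‖Q m‖ := by rw [← hmx, hSmk]
      _ ≤ ‖m‖ := hQnorm_le m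
      _ ≤ ‖x‖ + ε := hmlt.le
  -- Define `E = Π_h ∘ S` restricted to `X_h`.
  refine ⟨(Pih.toLinearMap ∘ₗ S) ∘ₗ (Vh.map V₀.mkQ).subtype, fun f => hPirange _, ?_, ?_⟩
  · rintro ⟨f, hf⟩
    obtain ⟨u, hu, rfl⟩ := hf
    have hdiff : S (V₀.mkQ u) - u ∈ V₀ := by
      rw [← Submodule.Quotient.eq]
      exact hsect _
    have : Pih (S (V₀.mkQ u)) = u + Pih (S (V₀.mkQ u) - u) := by
      rw [map_sub]
      rw [hPiproj u hu]
      abel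
    simp only [LinearMap.comp_apply, Submodule.subtype_apply, ContinuousLinearMap.coe_coe]
    have h0 : V₀.mkQ (Pih (S (V₀.mkQ u) - u)) = 0 :=
      (Submodule.Quotient.mk_eq_zero _).2 (hPipres _ hdiff)
    rw [this, map_add, h0, add_zero]
  · intro f
    calc ‖Pih (S (f : V ⧸ V₀))‖ ≤ ‖Pih‖ * ‖S (f : V ⧸ V₀)‖ := Pih.le_opNorm _
      _ ≤ ‖Pih‖ * ‖(f : V ⧸ V₀)‖ :=
        mul_le_mul_of_nonneg_left (hSnorm _) (norm_nonneg _)
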